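/- arXiv:2603.10346 — 5 statements merged into one kernel-verified Lean document; each statement's English description precedes it below -/
import Mathlib

section
/- Let X be a finite subset of ℝ^d, let P = conv(X), and let x be an extreme point of X such that P ⊆ x + cone({x' - x : x' adjacent to x}). Then for any θ ∈ ℝ^d, there exists y ∈ X with (y - x)ᵀθ > 0 if and only if there exists z adjacent to x with (z - x)ᵀθ > 0. -/
open Matrix

/-- The set of maximizers of `y ↦ y ⬝ᵥ w` over `P`. -/
def argmaxSet {d : ℕ} (P : Set (Fin d → ℝ)) (w : Fin d → ℝ) : Set (Fin d → ℝ) :=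
  {y ∈ P | ∀ z ∈ P, z ⬝ᵥ w ≤ y ⬝ᵥ w}

/-- `x` is an extreme point (vertex) of the polytope `conv X`. -/
def IsExtremePt {d : ℕ} (X : Finset (Fin d → ℝ)) (x : Fin d → ℝ) : Prop :=
  x ∈ X ∧ ∃ w : Fin d → ℝ, argmaxSet (convexHull ℝ (X : Set (Fin d → ℝ))) w = {x}

/-- Two distinct extreme points `x, x'` of `X` are adjacent if the segment
`conv {x, x'}` is exactly the argmax set of some linear functional. -/
def AdjacentPts {d : ℕ} (X : Finset (Fin d → ℝ)) (x x' : Fin d → ℝ) : Prop :=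
  IsExtremePt X x ∧ IsExtremePt X x' ∧ x ≠ x' ∧
    ∃ w : Fin d → ℝ,
      argmaxSet (convexHull ℝ (X : Set (Fin d → ℝ))) w = convexHull ℝ {x, x'}

theorem stmt0 {d : ℕ} (X : Finset (Fin d → ℝ)) (x : Fin d → ℝ)
    (hx : IsExtremePt X x)
    (hcone : convexHull ℝ (X : Set (Fin d → ℝ)) ⊆
      {p | ∃ α : (Fin d → ℝ) → ℝ, (∀ z, 0 ≤ α z) ∧
        (∀ z, α z ≠ 0 → AdjacentPts X x z) ∧
        p = x + ∑ z ∈ X, α z • (z - x)})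
    (θ : Fin d → ℝ) :
    (∃ y ∈ X, (y - x) ⬝ᵥ θ > 0) ↔
      (∃ z ∈ X, AdjacentPts X x z ∧ (z - x) ⬝ᵥ θ > 0) := by
  constructor
  · rintro ⟨y, hy, hyθ⟩
    obtain ⟨α, hα0, hαadj, hy_eq⟩ := hcone (subset_convexHull ℝ _ hy)
    have key : ∀ s : Finset (Fin d → ℝ),
        (∑ z ∈ s, α z • (z - x)) ⬝ᵥ θ = ∑ z ∈ s, α z * ((z - x) ⬝ᵥ θ) := by
      intro s
      induction s using Finset.induction with
      | empty => simp
      | insert _ _ h ih =>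
        rw [Finset.sum_insert h, Finset.sum_insert h, add_dotProduct,
          smul_dotProduct, ih, smul_eq_mul]
    have hsum : (y - x) ⬝ᵥ θ = ∑ z ∈ X, α z * ((z - x) ⬝ᵥ θ) := by
      rw [hy_eq, add_sub_cancel_left, key]
    rw [hsum] at hyθ
    obtain ⟨z, hzX, hz⟩ : ∃ z ∈ X, 0 < α z * ((z - x) ⬝ᵥ θ) := by
      by_contra h
      push_neg at h
      exact absurd (Finset.sum_nonpos h) (not_le.mpr hyθ)
    have hαz : 0 < α z := by
      rcases lt_or_eq_of_le (hα0 z) with h | h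
      · exact h
      · simp [← h] at hz
    exact ⟨z, hzX, hαadj z hαz.ne', by nlinarith⟩
  · rintro ⟨z, hz, _, hzθ⟩
    exact ⟨z, hz, hzθ⟩
end

section
/- Let A be a positive definite d×d matrix, x, x' ∈ ℝ^d with x ≠ x', and Δ > 0. Suppose θ, v ∈ ℝ^d satisfy (x - x')ᵀθ ≥ Δ and (x' - x)ᵀ(θ + v) ≥ Δ. Then vᵀAv ≥ 4Δ² / ‖x - x'‖²_{A⁻¹}, where ‖z‖²_{A⁻¹} = zᵀA⁻¹z. -/
open Matrix

lemma cs_aux {d : ℕ} (A : Matrix (Fin d) (Fin d) ℝ) (hA : A.PosDef)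
    (a b : Fin d → ℝ) :
    (a ⬝ᵥ A.mulVec b) ^ 2 ≤ (a ⬝ᵥ A.mulVec a) * (b ⬝ᵥ A.mulVec b) := by
  letI i1 := Matrix.toNormedAddCommGroup A hA
  letI i2 := Matrix.toInnerProductSpace A hA.posSemidef
  have h := @real_inner_mul_inner_self_le (Fin d → ℝ) i1.toSeminormedAddCommGroup i2 a b
  have hinner : ∀ u w : Fin d → ℝ,
      (@inner ℝ _ i2.toInner u w : ℝ) = u ⬝ᵥ A.mulVec w := fun u w => by
      show (A *ᵥ w) ⬝ᵥ star u = _; rw [star_trivial, dotProduct_comm]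
  rw [hinner, hinner, hinner] at h
  nlinarith [h]

theorem stmt1 {d : ℕ} (A : Matrix (Fin d) (Fin d) ℝ) (hA : A.PosDef)
    (x x' θ v : Fin d → ℝ) (hxx : x ≠ x') (Δ : ℝ) (hΔ : 0 < Δ)
    (h1 : (x - x') ⬝ᵥ θ ≥ Δ) (h2 : (x' - x) ⬝ᵥ (θ + v) ≥ Δ) :
    v ⬝ᵥ A.mulVec v ≥ 4 * Δ ^ 2 / ((x - x') ⬝ᵥ A⁻¹.mulVec (x - x')) := by
  set u := x - x' with hu
  have hu0 : u ≠ 0 := sub_ne_zero.mpr hxx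
  have hAinv : A⁻¹.PosDef := hA.inv
  have hpos : 0 < u ⬝ᵥ A⁻¹.mulVec u := by simpa using hAinv.dotProduct_mulVec_pos hu0
  -- u ⬝ᵥ v ≤ -2Δ
  have huv : u ⬝ᵥ v ≤ -(2 * Δ) := by
    have h2' : Δ ≤ (-u) ⬝ᵥ θ + (-u) ⬝ᵥ v := by
      have he : (x' - x) = -u := by rw [hu]; abel
      rw [he, dotProduct_add] at h2
      exact h2
    simp only [neg_dotProduct] at h2'
    linarith [h1]
  -- Cauchy-Schwarz with a = A⁻¹ u, b = v
  have hinvmul : A.mulVec (A⁻¹.mulVec u) = u := by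
    rw [mulVec_mulVec, Matrix.mul_nonsing_inv _ hA.det_pos.ne'.isUnit, one_mulVec]
  have hcs := cs_aux A hA (A⁻¹.mulVec u) v
  have hsymm : (A⁻¹.mulVec u) ⬝ᵥ A.mulVec v = u ⬝ᵥ v := by
    rw [Matrix.dotProduct_mulVec (A⁻¹.mulVec u) A v, ← mulVec_transpose,
      show Aᵀ = A from hA.isHermitian.eq, hinvmul]
  have haa : (A⁻¹.mulVec u) ⬝ᵥ A.mulVec (A⁻¹.mulVec u) = u ⬝ᵥ A⁻¹.mulVec u := by
    rw [hinvmul, Matrix.dotProduct_mulVec, ← mulVec_transpose,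
      show (A⁻¹)ᵀ = A⁻¹ from hAinv.isHermitian.eq, dotProduct_comm]
  rw [hsymm, haa] at hcs
  have h4 : 4 * Δ ^ 2 ≤ (u ⬝ᵥ v) ^ 2 := by nlinarith
  rw [ge_iff_le, div_le_iff₀ hpos]
  nlinarith
end

section
/- Let A be a positive definite d×d matrix, Δ > 0, V a finite subset of ℝ^d containing distinct points x and x', and w ∈ ℝ^d, ε > 0 such that xᵀw = x'ᵀw and xᵀw ≥ yᵀw + ε for all y ∈ V \ {x, x'}. Then there exist θ, v ∈ ℝ^d with vᵀAv = 4Δ² / ‖x - x'‖²_{A⁻¹}, such that (x - y)ᵀθ ≥ Δ for all y ∈ V \ {x}, and (x' - y)ᵀ(θ + v) ≥ Δ for all y ∈ V \ {x'}. -/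
open Matrix

theorem stmt3 {d : ℕ} (A : Matrix (Fin d) (Fin d) ℝ) (hA : A.PosDef)
    (Δ : ℝ) (hΔ : 0 < Δ) (V : Finset (Fin d → ℝ)) (x x' : Fin d → ℝ)
    (hx : x ∈ V) (hx' : x' ∈ V) (hne : x ≠ x')
    (w : Fin d → ℝ) (ε : ℝ) (hε : 0 < ε)
    (hw : x ⬝ᵥ w = x' ⬝ᵥ w)
    (hsep : ∀ y ∈ V, y ≠ x → y ≠ x' → x ⬝ᵥ w ≥ y ⬝ᵥ w + ε) :
    ∃ θ v : Fin d → ℝ,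
      v ⬝ᵥ A.mulVec v = 4 * Δ ^ 2 / ((x - x') ⬝ᵥ A⁻¹.mulVec (x - x')) ∧
      (∀ y ∈ V, y ≠ x → (x - y) ⬝ᵥ θ ≥ Δ) ∧
      (∀ y ∈ V, y ≠ x' → (x' - y) ⬝ᵥ (θ + v) ≥ Δ) := by
  have hz : x - x' ≠ 0 := sub_ne_zero.mpr hne
  set u : Fin d → ℝ := A⁻¹.mulVec (x - x') with hu
  have hAinv : A⁻¹.PosDef := hA.inv
  have hS : 0 < (x - x') ⬝ᵥ u := by
    have := hAinv.dotProduct_mulVec_pos hz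
    simpa using this
  set S := (x - x') ⬝ᵥ u with hSdef
  have hS0 : S ≠ 0 := ne_of_gt hS
  have hAu : A.mulVec u = x - x' := by
    rw [hu, Matrix.mulVec_mulVec, Matrix.mul_nonsing_inv A
      (isUnit_iff_ne_zero.mpr hA.det_pos.ne'), Matrix.one_mulVec]
  -- constants
  have hVne : V.Nonempty := ⟨x, hx⟩
  set C := V.sup' hVne (fun y => max |(x - y) ⬝ᵥ u| |(x' - y) ⬝ᵥ u|) with hC
  have hC0 : 0 ≤ C := le_trans (le_max_left _ _)
    (Finset.le_sup' (f := fun y => max |(x - y) ⬝ᵥ u| |(x' - y) ⬝ᵥ u|) hx |>.trans_eq rfl)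
    |>.trans' (abs_nonneg _)
  set α := (Δ + (Δ / S) * C) / ε with hα
  have hαε : α * ε = Δ + (Δ / S) * C := by
    rw [hα, div_mul_cancel₀ _ hε.ne']
  have hα0 : 0 ≤ α := by
    apply div_nonneg _ hε.le
    have : 0 ≤ (Δ / S) * C := mul_nonneg (div_nonneg hΔ.le hS.le) hC0
    linarith
  refine ⟨(Δ / S) • u + α • w, (-(2 * Δ / S)) • u, ?_, ?_, ?_⟩
  · rw [Matrix.mulVec_smul, hAu]
    rw [smul_dotProduct, dotProduct_smul, smul_eq_mul, smul_eq_mul,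
      dotProduct_comm, ← hSdef]
    field_simp
    ring
  · intro y hy hyx
    have key : (x - y) ⬝ᵥ ((Δ / S) • u + α • w)
        = (Δ / S) * ((x - y) ⬝ᵥ u) + α * ((x - y) ⬝ᵥ w) := by
      simp only [dotProduct_add, dotProduct_smul, smul_eq_mul]
    rw [key]
    rcases eq_or_ne y x' with rfl | hyx'
    · have h1 : (x - y) ⬝ᵥ u = S := hSdef.symm
      have h2 : (x - y) ⬝ᵥ w = 0 := by
        rw [sub_dotProduct, hw, sub_self]
      rw [h1, h2]
      field_simp
      simp
    · have hsep' := hsep y hy hyx hyx'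
      have hCy : |(x - y) ⬝ᵥ u| ≤ C :=
        le_trans (le_max_left _ _)
          (Finset.le_sup' (f := fun y => max |(x - y) ⬝ᵥ u| |(x' - y) ⬝ᵥ u|) hy)
      have h2 : ε ≤ (x - y) ⬝ᵥ w := by
        rw [sub_dotProduct]; linarith
      have h3 : α * ε ≤ α * ((x - y) ⬝ᵥ w) := by
        exact mul_le_mul_of_nonneg_left h2 hα0
      have h4 : -C ≤ (x - y) ⬝ᵥ u := (abs_le.mp hCy).1
      have h5 : (Δ / S) * (-C) ≤ (Δ / S) * ((x - y) ⬝ᵥ u) :=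
        mul_le_mul_of_nonneg_left h4 (div_nonneg hΔ.le hS.le)
      rw [hαε] at h3
      linarith
  · intro y hy hyx'
    have key : (x' - y) ⬝ᵥ ((Δ / S) • u + α • w + (-(2 * Δ / S)) • u)
        = (-(Δ / S)) * ((x' - y) ⬝ᵥ u) + α * ((x' - y) ⬝ᵥ w) := by
      simp only [dotProduct_add, dotProduct_smul, smul_eq_mul]
      ring
    rw [key]
    rcases eq_or_ne y x with rfl | hyx
    · have h1 : (x' - y) ⬝ᵥ u = -S := by
        rw [hSdef]
        have : x' - y = -(y - x') := by ring
        rw [this, neg_dotProduct]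
      have h2 : (x' - y) ⬝ᵥ w = 0 := by
        rw [sub_dotProduct, hw, sub_self]
      rw [h1, h2]
      field_simp
      simp
    · have hsep' := hsep y hy hyx hyx'
      have hCy : |(x' - y) ⬝ᵥ u| ≤ C :=
        le_trans (le_max_right _ _)
          (Finset.le_sup' (f := fun y => max |(x - y) ⬝ᵥ u| |(x' - y) ⬝ᵥ u|) hy)
      have h2 : ε ≤ (x' - y) ⬝ᵥ w := by
        rw [sub_dotProduct, ← hw]; linarith
      have h3 : α * ε ≤ α * ((x' - y) ⬝ᵥ w) :=
        mul_le_mul_of_nonneg_left h2 hα0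
      have h4 : (x' - y) ⬝ᵥ u ≤ C := (abs_le.mp hCy).2
      have h5 : (-(Δ / S)) * C ≤ (-(Δ / S)) * ((x' - y) ⬝ᵥ u) := by
        have : (Δ / S) * ((x' - y) ⬝ᵥ u) ≤ (Δ / S) * C :=
          mul_le_mul_of_nonneg_left h4 (div_nonneg hΔ.le hS.le)
        linarith
      rw [hαε] at h3
      linarith
end

section
/- Let θ ∈ ℝ^d, let M be a positive definite d×d matrix, let x*, x ∈ ℝ^d with (x* - x)ᵀθ > 0, and suppose x* - x = Σ_{y ∈ I} α_y (x* - y) where I is a finite set of points, each α_y ≥ 0, and (x* - y)ᵀθ > 0 for each y ∈ I. Then ‖x* - x‖²_M / ((x* - x)ᵀθ)² ≤ max_{y ∈ I} ‖x* - y‖²_M / ((x* - y)ᵀθ)². -/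
open Matrix

private lemma sum_dotProduct' {d : ℕ} {ι : Type*} (s : Finset ι) (f : ι → Fin d → ℝ)
    (v : Fin d → ℝ) : (∑ i ∈ s, f i) ⬝ᵥ v = ∑ i ∈ s, f i ⬝ᵥ v := by
  simp only [dotProduct, Finset.sum_apply, Finset.sum_mul]
  exact Finset.sum_comm

private lemma dotProduct_sum' {d : ℕ} {ι : Type*} (s : Finset ι) (f : ι → Fin d → ℝ)
    (v : Fin d → ℝ) : v ⬝ᵥ (∑ i ∈ s, f i) = ∑ i ∈ s, v ⬝ᵥ f i := by
  simp only [dotProduct, Finset.sum_apply, Finset.mul_sum]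
  exact Finset.sum_comm

private lemma mulVec_sum' {d : ℕ} {ι : Type*} (M : Matrix (Fin d) (Fin d) ℝ) (s : Finset ι)
    (f : ι → Fin d → ℝ) : M *ᵥ (∑ i ∈ s, f i) = ∑ i ∈ s, M *ᵥ f i := by
  rw [← Matrix.mulVecLin_apply, map_sum]
  simp [Matrix.mulVecLin_apply]

private lemma symm_dot {d : ℕ} {M : Matrix (Fin d) (Fin d) ℝ} (hM : Mᵀ = M)
    (u v : Fin d → ℝ) : u ⬝ᵥ M *ᵥ v = v ⬝ᵥ M *ᵥ u := by
  rw [Matrix.dotProduct_mulVec]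
  conv_lhs => rw [← hM, Matrix.vecMul_transpose]
  rw [dotProduct_comm]

private lemma cross_bound {d : ℕ} {M : Matrix (Fin d) (Fin d) ℝ} (hM : M.PosSemidef)
    (u v : Fin d → ℝ) (a b K : ℝ) (ha : 0 < a) (hb : 0 < b)
    (hu : u ⬝ᵥ M *ᵥ u ≤ K * a ^ 2) (hv : v ⬝ᵥ M *ᵥ v ≤ K * b ^ 2) :
    u ⬝ᵥ M *ᵥ v ≤ K * (a * b) := by
  have hMT : Mᵀ = M := by
    ext i j
    have := congrFun (congrFun hM.1 i) j
    simpa [Matrix.conjTranspose_apply, Matrix.transpose_apply] using this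
  have h0 : 0 ≤ (b • u - a • v) ⬝ᵥ M *ᵥ (b • u - a • v) := by
    simpa using hM.dotProduct_mulVec_nonneg (b • u - a • v)
  have hsymm := symm_dot hMT u v
  simp only [sub_dotProduct, dotProduct_sub, Matrix.mulVec_sub,
    Matrix.mulVec_smul, smul_dotProduct, dotProduct_smul, smul_eq_mul] at h0
  nlinarith [mul_pos ha hb, h0, hsymm]

theorem stmt4 {d : ℕ} (θ : Fin d → ℝ) (M : Matrix (Fin d) (Fin d) ℝ) (hM : M.PosDef)
    (xs x : Fin d → ℝ) (I : Finset (Fin d → ℝ)) (hI : I.Nonempty)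
    (α : (Fin d → ℝ) → ℝ) (hα : ∀ y ∈ I, 0 ≤ α y)
    (hx : (xs - x) ⬝ᵥ θ > 0)
    (hpos : ∀ y ∈ I, (xs - y) ⬝ᵥ θ > 0)
    (hsum : xs - x = ∑ y ∈ I, α y • (xs - y)) :
    ((xs - x) ⬝ᵥ M.mulVec (xs - x)) / ((xs - x) ⬝ᵥ θ) ^ 2 ≤
      I.sup' hI (fun y => ((xs - y) ⬝ᵥ M.mulVec (xs - y)) / ((xs - y) ⬝ᵥ θ) ^ 2) := by
  set K : ℝ := I.sup' hI (fun y => ((xs - y) ⬝ᵥ M.mulVec (xs - y)) / ((xs - y) ⬝ᵥ θ) ^ 2)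
    with hKdef
  set t : (Fin d → ℝ) → ℝ := fun y => (xs - y) ⬝ᵥ θ with ht
  -- diagonal bound
  have hK : ∀ y ∈ I, (xs - y) ⬝ᵥ M *ᵥ (xs - y) ≤ K * (t y) ^ 2 := by
    intro y hy
    have h1 : ((xs - y) ⬝ᵥ M.mulVec (xs - y)) / ((xs - y) ⬝ᵥ θ) ^ 2 ≤ K :=
      Finset.le_sup' (fun y => ((xs - y) ⬝ᵥ M.mulVec (xs - y)) / ((xs - y) ⬝ᵥ θ) ^ 2) hy
    have h2 : (0:ℝ) < (t y) ^ 2 := pow_pos (hpos y hy) 2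
    have := mul_le_mul_of_nonneg_right h1 (le_of_lt h2)
    rwa [div_mul_cancel₀ _ (ne_of_gt h2)] at this
  -- cross terms
  have hcross : ∀ y ∈ I, ∀ z ∈ I, (xs - y) ⬝ᵥ M *ᵥ (xs - z) ≤ K * (t y * t z) :=
    fun y hy z hz => cross_bound hM.posSemidef _ _ _ _ K (hpos y hy) (hpos z hz)
      (hK y hy) (hK z hz)
  have hT : (xs - x) ⬝ᵥ θ = ∑ y ∈ I, α y * t y := by
    rw [hsum, sum_dotProduct']
    simp [ht, smul_dotProduct]
  have hexp : (xs - x) ⬝ᵥ M *ᵥ (xs - x)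
      = ∑ y ∈ I, ∑ z ∈ I, α y * α z * ((xs - y) ⬝ᵥ M *ᵥ (xs - z)) := by
    conv_lhs => rw [hsum, sum_dotProduct']
    refine Finset.sum_congr rfl fun y hy => ?_
    rw [show M *ᵥ (∑ z ∈ I, α z • (xs - z)) = ∑ z ∈ I, α z • (M *ᵥ (xs - z)) by
      rw [mulVec_sum']
      exact Finset.sum_congr rfl fun z hz => Matrix.mulVec_smul M (α z) (xs - z)]
    rw [dotProduct_sum']
    simp only [smul_dotProduct, dotProduct_smul, smul_eq_mul, Finset.mul_sum]
    exact Finset.sum_congr rfl fun z hz => by ring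
  have hmain : (xs - x) ⬝ᵥ M *ᵥ (xs - x) ≤ K * ((xs - x) ⬝ᵥ θ) ^ 2 := by
    rw [hexp, hT]
    have hbound : ∑ y ∈ I, ∑ z ∈ I, α y * α z * ((xs - y) ⬝ᵥ M *ᵥ (xs - z))
        ≤ ∑ y ∈ I, ∑ z ∈ I, α y * α z * (K * (t y * t z)) := by
      refine Finset.sum_le_sum fun y hy => Finset.sum_le_sum fun z hz => ?_
      exact mul_le_mul_of_nonneg_left (hcross y hy z hz)
        (mul_nonneg (hα y hy) (hα z hz))
    refine hbound.trans (le_of_eq ?_)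
    rw [show (∑ y ∈ I, α y * t y) ^ 2 = ∑ y ∈ I, ∑ z ∈ I, (α y * t y) * (α z * t z) by
      rw [sq, Finset.sum_mul_sum]]
    rw [Finset.mul_sum]
    refine Finset.sum_congr rfl fun y hy => ?_
    rw [Finset.mul_sum]
    exact Finset.sum_congr rfl fun z hz => by ring
  have hT2 : (0:ℝ) < ((xs - x) ⬝ᵥ θ) ^ 2 := pow_pos hx 2
  rw [div_le_iff₀ hT2]
  exact hmain
end

section
/- Let a₁, …, a_T ∈ ℝ^d with T ≥ 2. Then Σ_{t=1}^{T−1} ‖a_t − (1/(T−t)) Σ_{s=t+1}^T a_s‖₂² ≤ 2 Σ_{t=1}^T ‖a_t‖₂². -/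
noncomputable def cc (T t : ℕ) : ℝ := -(1/((T:ℝ) - t - 1))

noncomputable def vv (T t s : ℕ) : ℝ :=
  (if s = t then 1 else 0) + (if t < s then cc T t else 0)

lemma filter_lt_eq (T t : ℕ) :
    (Finset.range T).filter (fun s => t < s) = Finset.Ico (t+1) T := by
  ext s; simp [Finset.mem_filter, Finset.mem_Ico, Finset.mem_range]; omega

lemma sum_vv_mul (T t : ℕ) (ht : t < T) (w : ℕ → ℝ) :
    ∑ s ∈ Finset.range T, vv T t s * w s
      = w t + cc T t * ∑ s ∈ Finset.Ico (t+1) T, w s := by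
  simp only [vv, add_mul, ite_mul, one_mul, zero_mul, Finset.sum_add_distrib]
  congr 1
  · rw [Finset.sum_ite_eq' (Finset.range T) t w]
    simp [Finset.mem_range.mpr ht]
  · rw [← Finset.sum_filter, filter_lt_eq, Finset.mul_sum]

lemma sum_vv_Ico (T t u : ℕ) (ht : t < u) (hu : u < T) :
    ∑ s ∈ Finset.Ico (t+1) T, vv T u s
      = 1 + cc T u * ((T:ℝ) - u - 1) := by
  simp only [vv, Finset.sum_add_distrib]
  congr 1
  · rw [Finset.sum_ite_eq' (Finset.Ico (t+1) T) u (fun _ => (1:ℝ))]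
    simp [Finset.mem_Ico, ht, hu]
  · rw [← Finset.sum_filter]
    have hf : (Finset.Ico (t+1) T).filter (fun s => u < s) = Finset.Ico (u+1) T := by
      ext s; simp [Finset.mem_filter, Finset.mem_Ico]; omega
    rw [hf, Finset.sum_const, Nat.card_Ico, nsmul_eq_mul, mul_comm]
    congr 1
    push_cast [Nat.cast_sub (by omega : u + 1 ≤ T)]
    ring

lemma orth (T t u : ℕ) (ht : t < u) (hu : u < T - 1) :
    ∑ s ∈ Finset.range T, vv T t s * vv T u s = 0 := by
  rw [sum_vv_mul T t (by omega) (vv T u), sum_vv_Ico T t u ht (by omega)]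
  have h1 : vv T u t = 0 := by
    simp only [vv, if_neg (show ¬ t = u by omega), if_neg (show ¬ u < t by omega)]
    norm_num
  have h2 : ((T:ℝ) - u - 1) ≠ 0 := by
    have : (1:ℝ) ≤ (T:ℝ) - u - 1 := by
      have : (u:ℝ) + 2 ≤ T := by exact_mod_cast (by omega : u + 2 ≤ T)
      linarith
    linarith
  rw [h1]
  simp only [cc]
  field_simp
  ring

lemma normsq (T t : ℕ) (ht : t < T - 1) :
    ∑ s ∈ Finset.range T, vv T t s * vv T t s ≤ 2 := by
  rw [sum_vv_mul T t (by omega) (vv T t)]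
  have h1 : vv T t t = 1 := by simp [vv]
  have h2 : ∑ s ∈ Finset.Ico (t+1) T, vv T t s = cc T t * ((T:ℝ) - t - 1) := by
    have : ∀ s ∈ Finset.Ico (t+1) T, vv T t s = cc T t := by
      intro s hs
      simp only [Finset.mem_Ico] at hs
      simp only [vv, if_neg (show ¬ s = t by omega), if_pos (show t < s by omega), zero_add]
    rw [Finset.sum_congr rfl this, Finset.sum_const, Nat.card_Ico, nsmul_eq_mul, mul_comm]
    congr 1
    push_cast [Nat.cast_sub (by omega : t + 1 ≤ T)]
    ring
  rw [h1, h2]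
  have h3 : (1:ℝ) ≤ (T:ℝ) - t - 1 := by
    have : (t:ℝ) + 2 ≤ T := by exact_mod_cast (by omega : t + 2 ≤ T)
    linarith
  have h4 : ((T:ℝ) - t - 1) ≠ 0 := by linarith
  have : cc T t * (cc T t * ((T:ℝ) - t - 1)) = 1 / ((T:ℝ) - t - 1) := by
    simp only [cc]; field_simp
  rw [this]
  have h5 : 1/((T:ℝ)-t-1) ≤ 1 := by rw [div_le_one (by linarith)]; linarith
  linarith

lemma bessel (n m : ℕ) (v : ℕ → ℕ → ℝ) (x : ℕ → ℝ)
    (horth : ∀ t < m, ∀ u < m, t ≠ u → ∑ s ∈ Finset.range n, v t s * v u s = 0)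
    (hnorm : ∀ t < m, ∑ s ∈ Finset.range n, v t s * v t s ≤ 2) :
    ∑ t ∈ Finset.range m, (∑ s ∈ Finset.range n, v t s * x s)^2
      ≤ 2 * ∑ s ∈ Finset.range n, (x s)^2 := by
  set p : ℕ → ℝ := fun t => ∑ s ∈ Finset.range n, v t s * x s with hp
  set q : ℕ → ℝ := fun t => p t / 2 with hq
  have h0 : (0:ℝ) ≤ ∑ s ∈ Finset.range n,
      (x s - ∑ t ∈ Finset.range m, q t * v t s)^2 :=
    Finset.sum_nonneg (fun s _ => sq_nonneg _)
  have hexp : ∀ s, (x s - ∑ t ∈ Finset.range m, q t * v t s)^2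
      = (x s)^2 - 2 * (x s * ∑ t ∈ Finset.range m, q t * v t s)
        + (∑ t ∈ Finset.range m, q t * v t s)^2 := by
    intro s; ring
  have h1 : ∑ s ∈ Finset.range n, x s * (∑ t ∈ Finset.range m, q t * v t s)
      = ∑ t ∈ Finset.range m, q t * p t := by
    simp_rw [Finset.mul_sum]
    rw [Finset.sum_comm]
    refine Finset.sum_congr rfl fun t _ => ?_
    rw [hp, Finset.mul_sum]
    exact Finset.sum_congr rfl fun s _ => by ring
  have h2 : ∑ s ∈ Finset.range n, (∑ t ∈ Finset.range m, q t * v t s)^2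
      = ∑ t ∈ Finset.range m, q t ^ 2 * (∑ s ∈ Finset.range n, v t s * v t s) := by
    have hs : ∀ s, (∑ t ∈ Finset.range m, q t * v t s)^2
        = ∑ t ∈ Finset.range m, ∑ u ∈ Finset.range m, (q t * v t s) * (q u * v u s) := by
      intro s; rw [sq, Finset.sum_mul_sum]
    simp_rw [hs]
    rw [Finset.sum_comm]
    refine Finset.sum_congr rfl fun t htm => ?_
    rw [Finset.sum_comm, Finset.sum_eq_single t]
    · rw [Finset.mul_sum]
      exact Finset.sum_congr rfl fun s _ => by ring
    · intro u hu hne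
      have : ∑ s ∈ Finset.range n, (q t * v t s) * (q u * v u s)
          = (q t * q u) * ∑ s ∈ Finset.range n, v t s * v u s := by
        rw [Finset.mul_sum]; exact Finset.sum_congr rfl fun s _ => by ring
      rw [this, horth t (Finset.mem_range.mp htm) u (Finset.mem_range.mp hu) (Ne.symm hne), mul_zero]
    · intro h; exact absurd htm h
  have h3 : ∑ t ∈ Finset.range m, q t ^ 2 * (∑ s ∈ Finset.range n, v t s * v t s)
      ≤ ∑ t ∈ Finset.range m, q t ^ 2 * 2 := by
    refine Finset.sum_le_sum fun t htm => ?_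
    exact mul_le_mul_of_nonneg_left (hnorm t (Finset.mem_range.mp htm)) (sq_nonneg _)
  have h4 : ∑ t ∈ Finset.range m, q t * p t = ∑ t ∈ Finset.range m, p t ^ 2 / 2 := by
    refine Finset.sum_congr rfl fun t _ => ?_
    simp [hq]; ring
  have h5 : ∑ t ∈ Finset.range m, q t ^ 2 * 2 = ∑ t ∈ Finset.range m, p t ^ 2 / 2 := by
    refine Finset.sum_congr rfl fun t _ => ?_
    simp [hq]; ring
  have hEq : ∑ s ∈ Finset.range n, (x s - ∑ t ∈ Finset.range m, q t * v t s)^2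
      = ∑ s ∈ Finset.range n, (x s)^2
        - 2 * ∑ t ∈ Finset.range m, q t * p t
        + ∑ t ∈ Finset.range m, q t ^ 2 * (∑ s ∈ Finset.range n, v t s * v t s) := by
    simp_rw [hexp]
    rw [Finset.sum_add_distrib, Finset.sum_sub_distrib, ← Finset.mul_sum, h1, h2]
  rw [hEq] at h0
  have hP : ∑ t ∈ Finset.range m, p t ^ 2
      ≤ 2 * ∑ s ∈ Finset.range n, (x s)^2 := by
    rw [h4] at h0
    have := h3
    rw [h5] at this
    have hsum : ∑ t ∈ Finset.range m, p t ^ 2 / 2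
        = (∑ t ∈ Finset.range m, p t ^ 2) / 2 := by
      rw [Finset.sum_div]
    rw [hsum] at h0 this
    linarith
  exact hP

/-- 0-indexed version of the paper's statement: for `t ∈ {0,…,T−2}` (paper's
`t+1 ∈ [T−1]`), the average is over `s ∈ {t+1,…,T−1}`, which has `T−t−1` elements
(the paper's `T − t`). -/
theorem stmt7 {d T : ℕ} (hT : 2 ≤ T) (a : ℕ → (Fin d → ℝ)) :
    ∑ t ∈ Finset.range (T - 1), ∑ i : Fin d,
        (a t i - (1 / ((T : ℝ) - t - 1)) * ∑ s ∈ Finset.Ico (t + 1) T, a s i) ^ 2 ≤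
      2 * ∑ t ∈ Finset.range T, ∑ i : Fin d, (a t i) ^ 2 := by
  rw [Finset.sum_comm]
  have hrhs : 2 * ∑ t ∈ Finset.range T, ∑ i : Fin d, (a t i)^2
      = ∑ i : Fin d, 2 * ∑ t ∈ Finset.range T, (a t i)^2 := by
    rw [Finset.sum_comm (s := Finset.range T), ← Finset.mul_sum]
  rw [hrhs]
  refine Finset.sum_le_sum fun i _ => ?_
  have hb := bessel T (T - 1) (vv T) (fun s => a s i)
    (fun t htm u hum hne => by
      rcases lt_or_gt_of_ne hne with h | h
      · exact orth T t u h hum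
      · rw [show (∑ s ∈ Finset.range T, vv T t s * vv T u s)
            = ∑ s ∈ Finset.range T, vv T u s * vv T t s from
            Finset.sum_congr rfl fun s _ => mul_comm _ _]
        exact orth T u t h htm)
    (fun t htm => normsq T t htm)
  refine le_trans (le_of_eq ?_) hb
  refine Finset.sum_congr rfl fun t htm => ?_
  rw [sum_vv_mul T t (by simp at htm; omega) (fun s => a s i)]
  simp only [cc]
  ring
end
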